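/- Let L be a distributive lattice and let a, b, a', b' ∈ L. Then Θ⁺_L(a,b) ∧ Θ⁺_L(a',b') = Θ⁺_L(a ∧ a', b ∨ b') in the congruence lattice of L, where Θ⁺_L(x,y) = Θ_L(x ∧ y, x). -/
import Mathlib


/-- A lattice congruence: an equivalence relation compatible with meet and
join. -/
def IsLatCon {L : Type*} [Lattice L] (r : L → L → Prop) : Prop :=
  Equivalence r ∧ (∀ a b c d : L, r a b → r c d → r (a ⊓ c) (b ⊓ d)) ∧
    (∀ a b c d : L, r a b → r c d → r (a ⊔ c) (b ⊔ d))

/-- The smallest lattice congruence identifying `x` and `y`. -/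
def thetaLat {L : Type*} [Lattice L] (x y : L) : L → L → Prop :=
  fun u v => ∀ r : L → L → Prop, IsLatCon r → r x y → r u v

/-- `Θ⁺(x,y) = Θ(x ⊓ y, x)`. -/
def thetaPlus {L : Type*} [Lattice L] (x y : L) : L → L → Prop :=
  thetaLat (x ⊓ y) x

lemma mem_thetaLat {L : Type*} [DistribLattice L] {c d u v : L}
    (h1 : u ⊓ c = v ⊓ c) (h2 : u ⊔ d = v ⊔ d) :
    thetaLat c d u v := by
  intro r hr hcd
  obtain ⟨heq, hinf, hsup⟩ := hr
  have key : ∀ x y : L, x ⊓ c = y ⊓ c → x ⊔ d = y ⊔ d → x ≤ y → r x y := by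
    intro x y e1 e2 hxy
    have h := hsup _ _ _ _ (hinf _ _ _ _ hcd (heq.refl y)) (heq.refl x)
    -- h : r (c ⊓ y ⊔ x) (d ⊓ y ⊔ x)
    have e3 : c ⊓ y ⊔ x = x := by
      have : c ⊓ y ≤ x := by
        have : c ⊓ y = c ⊓ x := by rw [inf_comm c y, ← e1, inf_comm]
        rw [this]; exact inf_le_right
      exact sup_eq_right.mpr this
    have e4 : d ⊓ y ⊔ x = y := by
      rw [sup_inf_right, sup_eq_left.mpr hxy, sup_comm d x, e2]
      exact inf_eq_right.mpr le_sup_left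
    rw [e3, e4] at h
    exact h
  have k1 : r (u ⊓ v) u := by
    apply key
    · rw [inf_assoc, ← h1, ← inf_assoc, inf_idem]
    · rw [sup_inf_right, ← h2, inf_idem]
    · exact inf_le_left
  have k2 : r (u ⊓ v) v := by
    apply key
    · rw [inf_assoc, ← h1, ← inf_assoc, inf_idem, h1]
    · rw [sup_inf_right, ← h2, inf_idem, h2]
    · exact inf_le_right
  exact heq.trans (heq.symm k1) k2

lemma thetaLat_char {L : Type*} [DistribLattice L] {c d u v : L} (hcd : c ≤ d)
    (h : thetaLat c d u v) : u ⊓ c = v ⊓ c ∧ u ⊔ d = v ⊔ d := by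
  apply h (fun x y => x ⊓ c = y ⊓ c ∧ x ⊔ d = y ⊔ d)
  · refine ⟨⟨fun _ => ⟨rfl, rfl⟩, fun h => ⟨h.1.symm, h.2.symm⟩,
      fun h h' => ⟨h.1.trans h'.1, h.2.trans h'.2⟩⟩, ?_, ?_⟩
    · rintro x y z w ⟨p1, p2⟩ ⟨q1, q2⟩
      constructor
      · calc x ⊓ z ⊓ c = (x ⊓ c) ⊓ (z ⊓ c) := by ac_rfl
          _ = (y ⊓ c) ⊓ (w ⊓ c) := by rw [p1, q1]
          _ = y ⊓ w ⊓ c := by ac_rfl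
      · rw [sup_inf_right, p2, q2, ← sup_inf_right]
    · rintro x y z w ⟨p1, p2⟩ ⟨q1, q2⟩
      constructor
      · rw [inf_sup_right, p1, q1, ← inf_sup_right]
      · calc x ⊔ z ⊔ d = (x ⊔ d) ⊔ (z ⊔ d) := by ac_rfl
          _ = (y ⊔ d) ⊔ (w ⊔ d) := by rw [p2, q2]
          _ = y ⊔ w ⊔ d := by ac_rfl
  · exact ⟨by rw [inf_idem, inf_eq_right.mpr hcd], by rw [sup_eq_right.mpr hcd, sup_idem]⟩

/-- In a distributive lattice `L`,
`Θ⁺(a,b) ∧ Θ⁺(a',b') = Θ⁺(a ⊓ a', b ⊔ b')` in the congruence lattice of `L`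
(meet of congruences is their intersection). -/
theorem thetaPlus_inf {L : Type*} [DistribLattice L] (a b a' b' : L) :
    ∀ u v : L, (thetaPlus a b u v ∧ thetaPlus a' b' u v) ↔
      thetaPlus (a ⊓ a') (b ⊔ b') u v := by
  intro u v
  constructor
  · rintro ⟨h1, h2⟩
    obtain ⟨e1, e2⟩ := thetaLat_char inf_le_left h1
    obtain ⟨f1, f2⟩ := thetaLat_char inf_le_left h2
    apply mem_thetaLat
    · have key : ∀ w : L, w ⊓ (a ⊓ a' ⊓ (b ⊔ b')) =
          (w ⊓ (a ⊓ b)) ⊓ a' ⊔ (w ⊓ (a' ⊓ b')) ⊓ a := by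
        intro w
        calc w ⊓ (a ⊓ a' ⊓ (b ⊔ b'))
            = w ⊓ ((a ⊓ a') ⊓ b ⊔ (a ⊓ a') ⊓ b') := by rw [inf_sup_left]
          _ = w ⊓ ((a ⊓ a') ⊓ b) ⊔ w ⊓ ((a ⊓ a') ⊓ b') := by rw [inf_sup_left]
          _ = (w ⊓ (a ⊓ b)) ⊓ a' ⊔ (w ⊓ (a' ⊓ b')) ⊓ a := by ac_rfl
      rw [key u, key v, e1, f1]
    · rw [sup_inf_left, e2, f2, ← sup_inf_left]
  · intro h
    have pair1 : thetaLat (a ⊓ b) a (a ⊓ a' ⊓ (b ⊔ b')) (a ⊓ a') := by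
      apply mem_thetaLat
      · apply le_antisymm
        · exact inf_le_inf_right _ inf_le_left
        · have hb : (a ⊓ a') ⊓ (a ⊓ b) ≤ b ⊔ b' :=
            le_trans (inf_le_right.trans inf_le_right) le_sup_left
          exact le_inf (le_inf inf_le_left hb) inf_le_right
      · rw [sup_eq_right.mpr (inf_le_left.trans inf_le_left :
            a ⊓ a' ⊓ (b ⊔ b') ≤ a), sup_eq_right.mpr (inf_le_left : a ⊓ a' ≤ a)]
    have pair2 : thetaLat (a' ⊓ b') a' (a ⊓ a' ⊓ (b ⊔ b')) (a ⊓ a') := by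
      apply mem_thetaLat
      · apply le_antisymm
        · exact inf_le_inf_right _ inf_le_left
        · have hb : (a ⊓ a') ⊓ (a' ⊓ b') ≤ b ⊔ b' :=
            le_trans (inf_le_right.trans inf_le_right) le_sup_right
          exact le_inf (le_inf inf_le_left hb) inf_le_right
      · rw [sup_eq_right.mpr (inf_le_left.trans inf_le_right :
            a ⊓ a' ⊓ (b ⊔ b') ≤ a'), sup_eq_right.mpr (inf_le_right : a ⊓ a' ≤ a')]
    constructor
    · intro r hr hgen
      exact h r hr (pair1 r hr hgen)
    · intro r hr hgen
      exact h r hr (pair2 r hr hgen)
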